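/- Let A ∈ GL_N(ℤ_p) with entries a_{i,j}, and κ = (κ_1 ≥ ... ≥ κ_N) a weakly decreasing integer tuple. Let ℓ̃ be the largest index i with a_{i,1} a unit in ℤ_p, and let ℓ be the largest index i with κ_i = κ_{ℓ̃}. Then the singular numbers of diag(p^{κ_1},...,p^{κ_N}) · A · diag(p^{-1},1,...,1) equal κ − e_ℓ, i.e. the tuple obtained from κ by decreasing the ℓ-th entry by 1. -/
import Mathlib


open Matrix

noncomputable def pDiag (p : ℕ) [Fact p.Prime] (n m : ℕ) (lam : Fin n → ℤ) :
    Matrix (Fin n) (Fin m) ℚ_[p] :=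
  Matrix.of fun i j => if (i : ℕ) = (j : ℕ) then (p : ℚ_[p]) ^ (lam i) else 0

noncomputable def intMap {p : ℕ} [Fact p.Prime] {n m : ℕ}
    (M : Matrix (Fin n) (Fin m) ℤ_[p]) : Matrix (Fin n) (Fin m) ℚ_[p] :=
  M.map (fun x => (x : ℚ_[p]))

/-- `lam` is the tuple of singular numbers of `A`. -/
def IsSNF (p : ℕ) [Fact p.Prime] {n m : ℕ} (A : Matrix (Fin n) (Fin m) ℚ_[p])
    (lam : Fin n → ℤ) : Prop :=
  Antitone lam ∧ ∃ (U : Matrix (Fin n) (Fin n) ℤ_[p]) (V : Matrix (Fin m) (Fin m) ℤ_[p]),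
    IsUnit U ∧ IsUnit V ∧ A = intMap U * pDiag p n m lam * intMap V

open Classical in
noncomputable def pval {p : ℕ} [Fact p.Prime] (x : ℚ_[p]) : WithTop ℤ :=
  if x = 0 then ⊤ else (x.valuation : WithTop ℤ)

noncomputable def minorInf {p : ℕ} [Fact p.Prime] {n m : ℕ}
    (A : Matrix (Fin n) (Fin m) ℚ_[p]) (k : ℕ) : WithTop ℤ :=
  ⨅ (r : Fin k ↪ Fin n) (c : Fin k ↪ Fin m), pval ((A.submatrix r c).det)

section Aux

variable {p : ℕ} [Fact p.Prime] {N : ℕ}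

lemma pDiag_eq_diagonal (lam : Fin N → ℤ) :
    pDiag p N N lam = Matrix.diagonal (fun i => (p : ℚ_[p]) ^ (lam i)) := by
  ext i j
  simp [pDiag, Matrix.diagonal_apply, Fin.val_eq_val]

lemma pDiag_mul_apply (lam : Fin N → ℤ) (M : Matrix (Fin N) (Fin N) ℚ_[p]) (i j : Fin N) :
    (pDiag p N N lam * M) i j = (p : ℚ_[p]) ^ (lam i) * M i j := by
  rw [pDiag_eq_diagonal, Matrix.diagonal_mul]

lemma mul_pDiag_apply (lam : Fin N → ℤ) (M : Matrix (Fin N) (Fin N) ℚ_[p]) (i j : Fin N) :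
    (M * pDiag p N N lam) i j = M i j * (p : ℚ_[p]) ^ (lam j) := by
  rw [pDiag_eq_diagonal, Matrix.mul_diagonal]

lemma intMap_eq (M : Matrix (Fin N) (Fin N) ℤ_[p]) :
    intMap M = M.map (PadicInt.Coe.ringHom (p := p)) := rfl

lemma intMap_mul (M M' : Matrix (Fin N) (Fin N) ℤ_[p]) :
    intMap (M * M') = intMap M * intMap M' := by
  simp only [intMap_eq]; exact Matrix.map_mul

lemma intMap_one : intMap (1 : Matrix (Fin N) (Fin N) ℤ_[p]) = 1 := by
  simp only [intMap_eq]; exact Matrix.map_one _ (map_zero _) (map_one _)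

lemma intMap_add (M M' : Matrix (Fin N) (Fin N) ℤ_[p]) :
    intMap (M + M') = intMap M + intMap M' := by
  ext i j; simp [intMap]

lemma intMap_det (M : Matrix (Fin N) (Fin N) ℤ_[p]) :
    (intMap M).det = ((M.det : ℤ_[p]) : ℚ_[p]) := by
  rw [intMap_eq]
  exact ((PadicInt.Coe.ringHom (p := p)).map_det M).symm

end Aux

/-- Key lemma: multiplying `diag(p^κ) A diag(p^{-1},1,...,1)` for `A ∈ GL_N(ℤ_p)`
decreases by one the κ-entry at the last index `ℓ` of the block of the value
`κ_{ℓ̃}`, where `ℓ̃` is the largest row index whose first-column entry is a unit. -/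
theorem sn_one_jump (p N : ℕ) [Fact p.Prime]
    (A : Matrix (Fin N) (Fin N) ℤ_[p]) (hA : IsUnit A)
    (kappa : Fin N → ℤ) (hkappa : Antitone kappa)
    (lt : Fin N) (h0 : ∀ (hN : 0 < N), IsUnit (A lt ⟨0, hN⟩))
    (h1 : ∀ i, lt < i → ∀ (hN : 0 < N), ¬ IsUnit (A i ⟨0, hN⟩))
    (l : Fin N) (hl : kappa l = kappa lt) (hl' : ∀ i, l < i → kappa i ≠ kappa lt) :
    IsSNF p
      (pDiag p N N kappa * intMap A *
        pDiag p N N (fun i => if (i : ℕ) = 0 then -1 else 0))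
      (fun i => kappa i - if i = l then 1 else 0) := by
  classical
  have hN : 0 < N := lt.pos
  have hp0 : (p : ℚ_[p]) ≠ 0 := Nat.cast_ne_zero.mpr (Fact.out : p.Prime).ne_zero
  set j0 : Fin N := ⟨0, hN⟩ with hj0def
  have hu : IsUnit (A lt j0) := h0 hN
  have hltl : lt ≤ l := by
    by_contra hc
    exact hl' lt (lt_of_not_ge hc) rfl
  -- antitonicity of the new tuple
  have hanti : Antitone (fun i => kappa i - if i = l then 1 else 0) := by
    intro i j hij
    dsimp only
    by_cases hi : i = l <;> by_cases hj : j = l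
    · rw [if_pos hi, if_pos hj]
      have : kappa i = kappa j := by rw [hi, hj]
      omega
    · have hlj : l < j := lt_of_le_of_ne (hi ▸ hij) (Ne.symm hj)
      have h1' : kappa j ≠ kappa lt := hl' j hlj
      have h2' : kappa j ≤ kappa l := hkappa (hi ▸ hij)
      rw [hl] at h2'
      rw [if_pos hi, if_neg hj]
      have h3' : kappa i = kappa lt := by rw [hi, hl]
      omega
    · have h2' : kappa l ≤ kappa i := hkappa (hj ▸ hij)
      have h3' : kappa j = kappa l := by rw [hj]
      rw [if_neg hi, if_pos hj]
      omega
    · rw [if_neg hi, if_neg hj]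
      have := hkappa hij
      omega
  -- the inverse of the pivot unit
  set v : ℤ_[p] := ↑hu.unit⁻¹ with hv
  have hvu : v * A lt j0 = 1 := by
    rw [hv]
    nth_rewrite 2 [← hu.unit_spec]
    exact hu.unit.inv_mul
  -- the matrices
  set σ : Equiv.Perm (Fin N) := Equiv.swap l lt with hσ
  set P : Matrix (Fin N) (Fin N) ℤ_[p] :=
    Matrix.of (fun i j => if σ i = j then 1 else 0) with hP
  set cE : Matrix (Fin N) (Fin N) ℤ_[p] :=
    Matrix.of (fun i k => if i ≤ l ∧ i ≠ lt ∧ k = lt then -(A i j0 * v) else 0) with hcE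
  set ct : Matrix (Fin N) (Fin N) ℤ_[p] :=
    Matrix.of (fun i k => if i ≤ l ∧ i ≠ lt ∧ k = lt
      then -((p : ℤ_[p]) ^ (kappa i - kappa lt).toNat * (A i j0 * v)) else 0) with hct
  set A2 : Matrix (Fin N) (Fin N) ℤ_[p] := P * ((1 + cE) * A) with hA2
  -- permutation matrix facts
  have hPmul : ∀ (M : Matrix (Fin N) (Fin N) ℤ_[p]) (i j : Fin N),
      (P * M) i j = M (σ i) j := by
    intro M i j
    rw [Matrix.mul_apply]
    simp only [hP, Matrix.of_apply, ite_mul, one_mul, zero_mul]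
    rw [Finset.sum_ite_eq Finset.univ (σ i) (fun k => M k j), if_pos (Finset.mem_univ _)]
  have hPP : P * P = 1 := by
    ext i j
    rw [hPmul]
    simp only [hP, Matrix.of_apply, hσ, Equiv.swap_apply_self, Matrix.one_apply]
  have hκσ : ∀ i, kappa (σ i) = kappa i := by
    intro i
    rcases eq_or_ne i l with rfl | hil
    · rw [hσ]; rw [Equiv.swap_apply_left]; rw [hl]
    · rcases eq_or_ne i lt with rfl | hilt
      · rw [hσ]; rw [Equiv.swap_apply_right]; rw [hl]
      · rw [hσ, Equiv.swap_apply_of_ne_of_ne hil hilt]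
  -- clearing matrix facts
  have hcEmul : ∀ (k j : Fin N), (cE * A) k j = cE k lt * A lt j := by
    intro k j
    rw [Matrix.mul_apply]
    apply Finset.sum_eq_single_of_mem lt (Finset.mem_univ _)
    intro m _ hm
    have hz : cE k m = 0 := by simp [hcE, hm]
    rw [hz, zero_mul]
  have hEA : (1 + cE) * A = A + cE * A := by rw [Matrix.add_mul, Matrix.one_mul]
  have hA1col : ∀ k, k ≤ l → k ≠ lt → ((1 + cE) * A) k j0 = 0 := by
    intro k hk1 hk2
    rw [hEA, Matrix.add_apply, hcEmul]
    have hc' : cE k lt = -(A k j0 * v) := by simp [hcE, hk1, hk2]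
    rw [hc', neg_mul, mul_assoc, hvu, mul_one, add_neg_cancel]
  have hA1colgt : ∀ k, l < k → ((1 + cE) * A) k j0 = A k j0 := by
    intro k hk
    rw [hEA, Matrix.add_apply, hcEmul]
    have hz : cE k lt = 0 := by simp [hcE, hk.not_ge]
    rw [hz, zero_mul, add_zero]
  -- divisibility of the first column of A2 away from l
  have hdvd : ∀ i : Fin N, i ≠ l → (p : ℤ_[p]) ∣ A2 i j0 := by
    intro i hi
    rw [hA2, hPmul]
    rcases eq_or_ne i lt with hilt | hilt
    · have hs : σ i = l := by rw [hσ, hilt]; exact Equiv.swap_apply_right l lt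
      rw [hs, hA1col l le_rfl (Ne.symm (hilt ▸ hi))]
      exact dvd_zero _
    · have hs : σ i = i := by rw [hσ]; exact Equiv.swap_apply_of_ne_of_ne hi hilt
      rw [hs]
      rcases le_or_gt i l with hle | hgt
      · rw [hA1col i hle hilt]; exact dvd_zero _
      · rw [hA1colgt i hgt]
        have hlti : lt < i := lt_of_le_of_lt hltl hgt
        rw [← PadicInt.norm_lt_one_iff_dvd]
        exact PadicInt.not_isUnit_iff.mp (h1 i hlti hN)
  choose b hb using hdvd
  set A3 : Matrix (Fin N) (Fin N) ℤ_[p] :=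
    Matrix.of (fun i j => if hi : i = l then (if (j : ℕ) = 0 then A2 i j else p * A2 i j)
      else (if (j : ℕ) = 0 then b i hi else A2 i j)) with hA3
  -- identity (b) : intMap A3 = De * intMap A2 * Dν
  have hjj0 : ∀ j : Fin N, (j : ℕ) = 0 → j = j0 := by
    intro j hj
    apply Fin.ext
    rw [hj, hj0def]
  have hid_b : intMap A3 =
      pDiag p N N (fun i => if i = l then 1 else 0) * intMap A2 *
        pDiag p N N (fun i => if (i : ℕ) = 0 then -1 else 0) := by
    ext i j
    rw [mul_pDiag_apply, pDiag_mul_apply]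
    simp only [intMap, Matrix.map_apply, hA3, Matrix.of_apply]
    by_cases hi : i = l <;> by_cases hj : (j : ℕ) = 0
    · rw [dif_pos hi, if_pos hj, if_pos hi, if_pos hj]
      rw [zpow_one, _root_.zpow_neg_one]
      field_simp
    · rw [dif_pos hi, if_neg hj, if_pos hi, if_neg hj]
      rw [zpow_one, zpow_zero, mul_one]
      push_cast
      ring
    · rw [dif_neg hi, if_pos hj, if_neg hi, if_pos hj]
      have hjeq : j = j0 := hjj0 j hj
      subst hjeq
      rw [hb i hi]
      rw [zpow_zero, _root_.zpow_neg_one, one_mul]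
      push_cast
      field_simp
    · rw [dif_neg hi, if_neg hj, if_neg hi, if_neg hj]
      rw [zpow_zero, one_mul, mul_one]
  -- identity (a)
  have hid_a : pDiag p N N (fun i => kappa i - if i = l then 1 else 0) *
      pDiag p N N (fun i => if i = l then 1 else 0) = pDiag p N N kappa := by
    have hfun : (fun i => (p : ℚ_[p]) ^ (kappa i - if i = l then 1 else 0) *
        (p : ℚ_[p]) ^ (if i = l then (1 : ℤ) else 0)) = fun i => (p : ℚ_[p]) ^ (kappa i) := by
      funext i
      rw [← zpow_add₀ hp0]
      congr 1
      ring
    rw [pDiag_eq_diagonal, pDiag_eq_diagonal, pDiag_eq_diagonal,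
      Matrix.diagonal_mul_diagonal, hfun]
  -- identity: P commutes with pDiag kappa
  have hid_P : pDiag p N N kappa * intMap P = intMap P * pDiag p N N kappa := by
    ext i j
    rw [pDiag_mul_apply, mul_pDiag_apply]
    simp only [intMap, Matrix.map_apply, hP, Matrix.of_apply, apply_ite (fun x : ℤ_[p] => (x : ℚ_[p])),
      PadicInt.coe_one, PadicInt.coe_zero]
    by_cases h : σ i = j
    · rw [if_pos h, ← h, hκσ i, mul_one, one_mul]
    · rw [if_neg h, mul_zero, zero_mul]
  -- identity: the clearing matrices intertwine pDiag kappa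
  have hid_c : pDiag p N N kappa * intMap cE = intMap ct * pDiag p N N kappa := by
    ext i j
    rw [pDiag_mul_apply, mul_pDiag_apply]
    simp only [intMap, Matrix.map_apply, hcE, hct, Matrix.of_apply]
    by_cases h : i ≤ l ∧ i ≠ lt ∧ j = lt
    · rw [if_pos h, if_pos h]
      obtain ⟨h1', _, h3'⟩ := h
      have hk : kappa lt ≤ kappa i := hl ▸ hkappa h1'
      have hzp : ((p : ℚ_[p]) ^ ((kappa i - kappa lt).toNat)) = (p : ℚ_[p]) ^ (kappa i - kappa lt) := by
        rw [← zpow_natCast, Int.toNat_of_nonneg (sub_nonneg.mpr hk)]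
      push_cast
      rw [hzp, h3', zpow_sub₀ hp0]
      have hne : (p : ℚ_[p]) ^ (kappa lt) ≠ 0 := zpow_ne_zero _ hp0
      field_simp
    · rw [if_neg h, if_neg h]
      push_cast
      ring
  -- nilpotency of the clearing parts and invertibility
  have hcc : ct * ct = 0 := by
    ext i j
    rw [Matrix.mul_apply]
    rw [show (0 : Matrix (Fin N) (Fin N) ℤ_[p]) i j = 0 from rfl]
    apply Finset.sum_eq_zero
    intro k _
    rcases eq_or_ne k lt with rfl | hk
    · have : ct k j = 0 := by simp [hct]
      rw [this, mul_zero]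
    · have : ct i k = 0 := by simp [hct, hk]
      rw [this, zero_mul]
  have hee : cE * cE = 0 := by
    ext i j
    rw [Matrix.mul_apply]
    rw [show (0 : Matrix (Fin N) (Fin N) ℤ_[p]) i j = 0 from rfl]
    apply Finset.sum_eq_zero
    intro k _
    rcases eq_or_ne k lt with rfl | hk
    · have : cE k j = 0 := by simp [hcE]
      rw [this, mul_zero]
    · have : cE i k = 0 := by simp [hcE, hk]
      rw [this, zero_mul]
  have hct1 : (1 - ct) * (1 + ct) = 1 := by
    have h' : (1 - ct) * (1 + ct) = 1 - ct * ct := by noncomm_ring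
    rw [h', hcc, sub_zero]
  have hcE1 : (1 + cE) * (1 - cE) = 1 := by
    have h' : (1 + cE) * (1 - cE) = 1 - cE * cE := by noncomm_ring
    rw [h', hee, sub_zero]
  have hUct : IsUnit (1 - ct) := by
    have := invertibleOfRightInverse _ _ hct1
    exact isUnit_of_invertible _
  have hUcE : IsUnit (1 + cE) := by
    have := invertibleOfRightInverse _ _ hcE1
    exact isUnit_of_invertible _
  have hUP : IsUnit P := by
    have := invertibleOfRightInverse _ _ hPP
    exact isUnit_of_invertible _
  have hA2u : IsUnit A2 := by
    rw [hA2]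
    exact hUP.mul (hUcE.mul hA)
  -- determinant computations
  have hdetpDiag : ∀ lam : Fin N → ℤ, (pDiag p N N lam).det = ∏ i, (p : ℚ_[p]) ^ (lam i) := by
    intro lam
    rw [pDiag_eq_diagonal, Matrix.det_diagonal]
  have hdet_e : (pDiag p N N (fun i => if i = l then 1 else 0)).det = (p : ℚ_[p]) := by
    rw [hdetpDiag]
    simp only [apply_ite (fun t : ℤ => (p : ℚ_[p]) ^ t), zpow_one, zpow_zero]
    simp [Finset.prod_ite_eq']
  have hdet_nu : (pDiag p N N (fun i => if (i : ℕ) = 0 then -1 else 0)).det = (p : ℚ_[p])⁻¹ := by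
    rw [hdetpDiag]
    have hcond : ∀ i : Fin N, ((i : ℕ) = 0) = (i = j0) := by
      intro i
      apply propext
      constructor
      · exact hjj0 i
      · intro h; subst h; rfl
    simp only [hcond]
    simp only [apply_ite (fun t : ℤ => (p : ℚ_[p]) ^ t), _root_.zpow_neg_one, zpow_zero]
    simp [Finset.prod_ite_eq']
  have hdetA3 : A3.det = A2.det := by
    apply Subtype.coe_injective
    have h2 := congrArg Matrix.det hid_b
    rw [Matrix.det_mul, Matrix.det_mul, hdet_e, hdet_nu, intMap_det, intMap_det] at h2
    show ((A3.det : ℤ_[p]) : ℚ_[p]) = ((A2.det : ℤ_[p]) : ℚ_[p])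
    rw [h2]
    field_simp
  have hA3u : IsUnit A3 := by
    rw [Matrix.isUnit_iff_isUnit_det, hdetA3]
    exact (Matrix.isUnit_iff_isUnit_det _).mp hA2u
  -- the combined commutation for 1 ± c
  have hid_c' : pDiag p N N kappa * intMap (1 + cE) = intMap (1 + ct) * pDiag p N N kappa := by
    rw [intMap_add, intMap_add, intMap_one]
    rw [mul_add, add_mul, mul_one, one_mul, hid_c]
  have hctm : intMap (1 - ct) * intMap (1 + ct) = 1 := by
    rw [← intMap_mul, hct1, intMap_one]
  -- assemble
  refine ⟨hanti, (1 - ct) * P, A3, hUct.mul hUP, hA3u, ?_⟩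
  symm
  rw [intMap_mul, hid_b]
  rw [show intMap (1 - ct) * intMap P * pDiag p N N (fun i => kappa i - if i = l then 1 else 0) *
      (pDiag p N N (fun i => if i = l then 1 else 0) * intMap A2 *
        pDiag p N N (fun i => if (i : ℕ) = 0 then -1 else 0)) =
      intMap (1 - ct) * (intMap P *
        (pDiag p N N (fun i => kappa i - if i = l then 1 else 0) *
          pDiag p N N (fun i => if i = l then 1 else 0)) * intMap A2) *
        pDiag p N N (fun i => if (i : ℕ) = 0 then -1 else 0) by
    simp only [Matrix.mul_assoc]]
  rw [hid_a, hA2, intMap_mul, intMap_mul]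
  rw [show intMap P * pDiag p N N kappa * (intMap P * (intMap (1 + cE) * intMap A)) =
      (intMap P * pDiag p N N kappa) * intMap P * intMap (1 + cE) * intMap A by
    simp only [Matrix.mul_assoc]]
  rw [← hid_P]
  rw [show pDiag p N N kappa * intMap P * intMap P * intMap (1 + cE) * intMap A =
      pDiag p N N kappa * (intMap P * intMap P) * intMap (1 + cE) * intMap A by
    simp only [Matrix.mul_assoc]]
  rw [← intMap_mul, hPP, intMap_one, mul_one]
  rw [show intMap (1 - ct) * (pDiag p N N kappa * intMap (1 + cE) * intMap A) *
      pDiag p N N (fun i => if (i : ℕ) = 0 then -1 else 0) =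
      intMap (1 - ct) * (pDiag p N N kappa * intMap (1 + cE)) * intMap A *
      pDiag p N N (fun i => if (i : ℕ) = 0 then -1 else 0) by
    simp only [Matrix.mul_assoc]]
  rw [hid_c']
  rw [show intMap (1 - ct) * (intMap (1 + ct) * pDiag p N N kappa) * intMap A *
      pDiag p N N (fun i => if (i : ℕ) = 0 then -1 else 0) =
      (intMap (1 - ct) * intMap (1 + ct)) * pDiag p N N kappa * intMap A *
      pDiag p N N (fun i => if (i : ℕ) = 0 then -1 else 0) by
    simp only [Matrix.mul_assoc]]
  rw [hctm, one_mul]
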